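/- arXiv:2505.08727 — 2 statements merged into one kernel-verified Lean document; each statement's English description precedes it below -/
import Mathlib

section
/- Let X be a discrete random variable on a finite sample space Ω with |Ω| = n, and suppose there exists α ∈ (0, 1/n] such that P(X = x) ≥ α for all x ∈ Ω. Then the Shannon entropy satisfies H(X) ≥ -(1 - α(n-1))·log₂(1 - α(n-1)) - (n-1)·α·log₂(α). -/
open Finset

/-- Shannon entropy (base 2) of a finitely supported probability mass function. -/
noncomputable def shannonEntropy {Ω : Type*} [Fintype Ω] (p : Ω → ℝ) : ℝ :=
  -∑ x, p x * Real.logb 2 (p x)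

/-- **Minimum Probability Entropy Bound.** If every outcome of a discrete random
variable on a sample space of size `n` has probability at least `α ∈ (0, 1/n]`,
then `H(X) ≥ -(1 - α(n-1)) log₂ (1 - α(n-1)) - (n-1) α log₂ α`. -/
theorem min_prob_entropy_bound {Ω : Type*} [Fintype Ω] (p : Ω → ℝ) (n : ℕ)
    (hn : Fintype.card Ω = n)
    (hp0 : ∀ x, 0 ≤ p x) (hp1 : ∑ x, p x = 1)
    (α : ℝ) (hα0 : 0 < α) (hα1 : α ≤ 1 / n)
    (hmin : ∀ x, α ≤ p x) :
    shannonEntropy p ≥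
      -((1 - α * (n - 1)) * Real.logb 2 (1 - α * (n - 1)))
        - (n - 1) * α * Real.logb 2 α := by
  classical
  have hn1 : 1 ≤ n := by
    rcases Nat.eq_zero_or_pos n with h | h
    · exfalso
      have : IsEmpty Ω := Fintype.card_eq_zero_iff.mp (hn.trans h)
      rw [Finset.univ_eq_empty] at hp1
      simp at hp1
    · exact h
  have hnR : (1:ℝ) ≤ (n:ℝ) := by exact_mod_cast hn1
  have hnpos : (0:ℝ) < (n:ℝ) := by linarith
  set f : ℝ → ℝ := fun t => -(t * Real.logb 2 t) with hfdef
  have hent : shannonEntropy p = ∑ x, f (p x) := by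
    rw [shannonEntropy, ← Finset.sum_neg_distrib]
  have hconc : ConcaveOn ℝ (Set.Ici (0:ℝ)) f := by
    have h2 : (0:ℝ) ≤ (Real.log 2)⁻¹ := by positivity
    have h := (Real.strictConcaveOn_negMulLog.concaveOn).smul h2
    have hfeq : f = fun x => (Real.log 2)⁻¹ • Real.negMulLog x := by
      funext t
      simp only [hfdef, Real.negMulLog, Real.logb, Pi.smul_apply, smul_eq_mul]
      field_simp
    rw [hfeq]; exact h
  set M : ℝ := 1 - α * ((n:ℝ) - 1) with hMdef
  have hexp : α * ((n:ℝ) - 1) = α * n - α := by ring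
  have hαn : α * n ≤ 1 := by
    have := (le_div_iff₀ hnpos).mp hα1
    linarith
  have hMα : α ≤ M := by rw [hMdef]; linarith
  have hub : ∀ x, p x ≤ M := by
    intro x
    have hsplit : p x + ∑ y ∈ Finset.univ.erase x, p y = 1 := by
      rw [← hp1, Finset.add_sum_erase _ _ (Finset.mem_univ x)]
    have hcard : (Finset.univ.erase x).card = n - 1 := by
      rw [Finset.card_erase_of_mem (Finset.mem_univ x), Finset.card_univ, hn]
    have hge : (Finset.univ.erase x).card • α ≤ ∑ y ∈ Finset.univ.erase x, p y :=
      Finset.card_nsmul_le_sum _ _ _ (fun y _ => hmin y)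
    rw [hcard, nsmul_eq_mul] at hge
    have hcast : ((n - 1 : ℕ) : ℝ) = (n:ℝ) - 1 := by
      have := Nat.cast_sub hn1 (R := ℝ); simpa using this
    rw [hcast] at hge
    rw [hMdef]
    linarith
  by_cases hcase : α * n = 1
  · have hM : M = α := by rw [hMdef]; linarith
    have hall : ∀ x, p x = α := fun x => le_antisymm (hM ▸ hub x) (hmin x)
    rw [hent, ge_iff_le]
    have h1 : ∑ x : Ω, f (p x) = (n:ℝ) * f α := by
      simp only [hall]
      rw [Finset.sum_const, Finset.card_univ, hn, nsmul_eq_mul]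
    have h2 : -(M * Real.logb 2 M) - ((n:ℝ) - 1) * α * Real.logb 2 α
        = (n:ℝ) * f α := by rw [hM]; simp only [hfdef]; ring
    rw [h1, h2]
  · have hlt : α * n < 1 := lt_of_le_of_ne hαn hcase
    have hd : 0 < M - α := by rw [hMdef]; linarith
    have hMne : M - α ≠ 0 := ne_of_gt hd
    have hkey : ∀ x, ((M - p x)/(M - α)) * f α + ((p x - α)/(M - α)) * f M ≤ f (p x) := by
      intro x
      have ha : (0:ℝ) ≤ (M - p x)/(M - α) := div_nonneg (by linarith [hub x]) hd.le
      have hb : (0:ℝ) ≤ (p x - α)/(M - α) := div_nonneg (by linarith [hmin x]) hd.le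
      have hab : (M - p x)/(M - α) + (p x - α)/(M - α) = 1 := by
        rw [← add_div, div_eq_one_iff_eq hMne]; ring
      have h := hconc.2 (Set.mem_Ici.mpr hα0.le) (Set.mem_Ici.mpr (hα0.le.trans hMα))
        ha hb hab
      have heq : ((M - p x)/(M - α)) • α + ((p x - α)/(M - α)) • M = p x := by
        simp only [smul_eq_mul]
        field_simp
        ring
      rw [heq] at h
      simpa [smul_eq_mul] using h
    have hsum : ∑ x, (((M - p x)/(M - α)) * f α + ((p x - α)/(M - α)) * f M)
        ≤ ∑ x, f (p x) := Finset.sum_le_sum (fun x _ => hkey x)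
    have hs1 : ∑ x, (M - p x) = (n:ℝ) * M - 1 := by
      rw [Finset.sum_sub_distrib, hp1, Finset.sum_const, Finset.card_univ, hn,
        nsmul_eq_mul]
    have hs2 : ∑ x : Ω, (p x - α) = 1 - (n:ℝ) * α := by
      rw [Finset.sum_sub_distrib, hp1, Finset.sum_const, Finset.card_univ, hn,
        nsmul_eq_mul]
    have hc1 : ((n:ℝ) * M - 1)/(M - α) = (n:ℝ) - 1 := by
      rw [div_eq_iff hMne, hMdef]; ring
    have hc2 : (1 - (n:ℝ) * α)/(M - α) = 1 := by
      rw [div_eq_iff hMne, hMdef]; ring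
    have hcalc : ∑ x, (((M - p x)/(M - α)) * f α + ((p x - α)/(M - α)) * f M)
        = ((n:ℝ) - 1) * f α + f M := by
      rw [Finset.sum_add_distrib, ← Finset.sum_mul, ← Finset.sum_mul,
        ← Finset.sum_div, ← Finset.sum_div, hs1, hs2, hc1, hc2, one_mul]
    rw [hcalc] at hsum
    rw [hent, ge_iff_le]
    have hrhs : -(M * Real.logb 2 M) - ((n:ℝ) - 1) * α * Real.logb 2 α
        = ((n:ℝ) - 1) * f α + f M := by simp only [hfdef]; ring
    linarith
end

section
/- Let X be a discrete random variable with finite support of size n ≥ 2 and minimum probability α ∈ (0, 1/n]. Among all probability distributions on n outcomes with every probability ≥ α, the entropy is minimized by the distribution P(x₁) = 1 - α(n-1), P(xᵢ) = α for i ≥ 2. -/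
open Finset

lemma shannonEntropy_eq {Ω : Type*} [Fintype Ω] (p : Ω → ℝ) :
    shannonEntropy p = (∑ x, Real.negMulLog (p x)) / Real.log 2 := by
  unfold shannonEntropy
  rw [Finset.sum_div, ← Finset.sum_neg_distrib]
  congr 1; funext x
  simp [Real.negMulLog, Real.logb]
  ring

/-- chord inequality for a concave function on `Ici 0`. -/
lemma chord_le {f : ℝ → ℝ} (hf : ConcaveOn ℝ (Set.Ici 0) f) {a b x : ℝ}
    (ha : 0 ≤ a) (hab : a < b) (hax : a ≤ x) (hxb : x ≤ b) :
    f a + (f b - f a) / (b - a) * (x - a) ≤ f x := by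
  set t : ℝ := (x - a) / (b - a) with ht
  have hba : (0:ℝ) < b - a := by linarith
  have ht0 : 0 ≤ t := div_nonneg (by linarith) hba.le
  have ht1 : t ≤ 1 := by
    rw [div_le_one hba]; linarith
  have hx : (1 - t) * a + t * b = x := by
    field_simp [ht]
    have h' : t * (b - a) = x - a := by rw [ht]; exact div_mul_cancel₀ _ hba.ne'
    linear_combination h'
  have := hf.2 (Set.mem_Ici.2 ha) (Set.mem_Ici.2 (by linarith : (0:ℝ) ≤ b))
    (by linarith : (0:ℝ) ≤ 1 - t) ht0 (by ring)
  simp only [smul_eq_mul] at this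
  rw [hx] at this
  calc f a + (f b - f a) / (b - a) * (x - a)
      = (1 - t) * f a + t * f b := by rw [ht]; field_simp; ring
    _ ≤ f x := this

/-- Among all probability distributions on `n ≥ 2` outcomes in which every
outcome has probability at least `α ∈ (0, 1/n]`, the entropy is minimized by
the distribution assigning `1 - α(n-1)` to one outcome and `α` to the others. -/
theorem entropy_min_at_vertex (n : ℕ) (hn : 2 ≤ n)
    (α : ℝ) (hα0 : 0 < α) (hα1 : α ≤ 1 / n)
    (q : Fin n → ℝ) (hq0 : ∀ i, 0 ≤ q i) (hq1 : ∑ i, q i = 1)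
    (hqα : ∀ i, α ≤ q i) :
    shannonEntropy (fun i : Fin n => if (i : ℕ) = 0 then 1 - α * (n - 1) else α) ≤
      shannonEntropy q := by
  haveI : NeZero n := ⟨by omega⟩
  have hn1 : (1:ℝ) ≤ (n:ℝ) - 1 := by
    have : (2:ℝ) ≤ (n:ℝ) := by exact_mod_cast hn
    linarith
  have hnpos : (0:ℝ) < n := by linarith
  set p0 : ℝ := 1 - α * (n - 1) with hp0def
  have hαp0 : α ≤ p0 := by
    have : α * n ≤ 1 := by
      rw [le_div_iff₀ hnpos] at hα1; linarith
    simp only [hp0def]; nlinarith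
  -- each q i ≤ p0
  have hqp0 : ∀ i, q i ≤ p0 := by
    intro i
    have hsub : ((univ.erase i).card : ℝ) • α ≤ ∑ j ∈ univ.erase i, q j :=
      Finset.card_nsmul_le_sum _ _ _ (fun j _ => hqα j) |>.trans_eq' (by
        simp [nsmul_eq_mul])
    have hcard : (univ.erase i).card = n - 1 := by
      simp [Finset.card_erase_of_mem]
    have hsplit : q i + ∑ j ∈ univ.erase i, q j = 1 := by
      rw [Finset.add_sum_erase _ _ (Finset.mem_univ i)]; exact hq1
    have hcast : ((n - 1 : ℕ) : ℝ) = (n:ℝ) - 1 := by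
      have : 1 ≤ n := by omega
      push_cast [this]; ring
    rw [hcard, smul_eq_mul, hcast] at hsub
    simp only [hp0def]; nlinarith
  -- entropy of the vertex distribution
  have hvertex : (∑ i : Fin n, Real.negMulLog
      ((fun i : Fin n => if (i : ℕ) = 0 then 1 - α * (n - 1) else α) i))
      = Real.negMulLog p0 + ((n:ℝ) - 1) * Real.negMulLog α := by
    have : ∀ i : Fin n, Real.negMulLog (if (i : ℕ) = 0 then 1 - α * (n - 1) else α)
        = (if i = (0 : Fin n) then Real.negMulLog p0 - Real.negMulLog α else 0)
          + Real.negMulLog α := by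
      intro i
      by_cases h : i = 0
      · simp [h, hp0def]
      · have : (i : ℕ) ≠ 0 := fun hc => h (Fin.ext hc)
        simp [h, this]
    simp only [this, Finset.sum_add_distrib, Finset.sum_ite_eq', Finset.mem_univ,
      if_true, Finset.sum_const, Finset.card_univ, Fintype.card_fin, nsmul_eq_mul]
    have hcast : ((n:ℕ):ℝ) * Real.negMulLog α = ((n:ℝ) - 1) * Real.negMulLog α + Real.negMulLog α := by ring
    linarith [hcast]
  rw [shannonEntropy_eq, shannonEntropy_eq, hvertex]
  have hlog : (0:ℝ) < Real.log 2 := Real.log_pos (by norm_num)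
  rw [div_le_div_iff_of_pos_right hlog]
  -- main inequality on negMulLog sums
  rcases eq_or_lt_of_le hαp0 with heq | hlt
  · -- degenerate case: all q i = α, p0 = α
    have hq : ∀ i, q i = α := by
      intro i
      by_contra hne
      have hlt' : α < q i := lt_of_le_of_ne (hqα i) (Ne.symm hne)
      have := hqp0 i
      rw [← heq] at this; linarith
    have hsum : ∑ i : Fin n, Real.negMulLog (q i) = (n:ℝ) * Real.negMulLog α := by
      simp [hq, Finset.sum_const, Finset.card_univ, nsmul_eq_mul]
    rw [hsum, ← heq]; linarith
  · set A : ℝ := (Real.negMulLog p0 - Real.negMulLog α) / (p0 - α) with hA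
    have hline : ∀ i, Real.negMulLog α + A * (q i - α) ≤ Real.negMulLog (q i) :=
      fun i => chord_le Real.concaveOn_negMulLog hα0.le hlt (hqα i) (hqp0 i)
    have hsum : ∑ i : Fin n, (Real.negMulLog α + A * (q i - α))
        ≤ ∑ i : Fin n, Real.negMulLog (q i) :=
      Finset.sum_le_sum (fun i _ => hline i)
    have hlhs : ∑ i : Fin n, (Real.negMulLog α + A * (q i - α))
        = (n:ℝ) * Real.negMulLog α + A * (1 - (n:ℝ) * α) := by
      rw [Finset.sum_add_distrib]
      simp only [Finset.sum_const, Finset.card_univ, Fintype.card_fin, nsmul_eq_mul,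
        ← Finset.mul_sum, Finset.sum_sub_distrib, hq1]
    have hAp0 : A * (p0 - α) = Real.negMulLog p0 - Real.negMulLog α := by
      rw [hA, div_mul_cancel₀ _ (sub_ne_zero.2 (ne_of_gt hlt))]
    have hp0α : p0 - α = 1 - (n:ℝ) * α := by rw [hp0def]; ring
    calc Real.negMulLog p0 + ((n:ℝ) - 1) * Real.negMulLog α
        = (n:ℝ) * Real.negMulLog α + A * (1 - (n:ℝ) * α) := by
          rw [← hp0α, hAp0]; ring
      _ ≤ _ := hlhs ▸ hsum
end
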